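/- arXiv:1912.09830 — 6 statements merged into one kernel-verified Lean document; each statement's English description precedes it below -/
import Mathlib

section
/- Let F_q be a finite field and α ∈ F_q. For a nonzero f ∈ F_q(x), define ord_α f := rootMultiplicity(α, num f) − rootMultiplicity(α, denom f) ∈ ℤ. Let f₁, f₂ be nonzero elements of F_q(x) with f₁ ≠ f₂, and suppose ev f₁ α = ev f₂ α. Then ord_α(f₁ − f₂) ≥ min(ord_α f₁, 0) + min(ord_α f₂, 0) + 1. -/
open Polynomial

/-- Evaluation of a rational function at the rational places of `Fq(x)`,
with values in `Fq ∪ {∞}` encoded as `Option Fq` (`none` = `∞`). -/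
noncomputable def ev {Fq : Type*} [Field Fq] [DecidableEq Fq]
    (f : RatFunc Fq) : Option Fq → Option Fq
  | some α =>
      if f.denom.eval α ≠ 0 then some (f.num.eval α / f.denom.eval α) else none
  | none =>
      if f.num.degree = f.denom.degree then
        some (f.num.leadingCoeff / f.denom.leadingCoeff)
      else if f.num.degree < f.denom.degree then some (0 : Fq) else none

/-- The order of vanishing of a nonzero rational function at the finite rational
place `P_α`. -/
noncomputable def ordAt {Fq : Type*} [Field Fq] (α : Fq) (f : RatFunc Fq) : ℤ :=
  (f.num.rootMultiplicity α : ℤ) - (f.denom.rootMultiplicity α : ℤ)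

/-- If `f = p / q` with `q ≠ 0`, then `ordAt α f` can be computed from `p` and `q`. -/
lemma ordAt_eq_of_eq_div {Fq : Type*} [Field Fq] (α : Fq) (f : RatFunc Fq)
    (p q : Polynomial Fq) (hp : p ≠ 0) (hq : q ≠ 0)
    (h : f.num * q = p * f.denom) :
    ordAt α f = (p.rootMultiplicity α : ℤ) - (q.rootMultiplicity α : ℤ) := by
  have hnum : f.num ≠ 0 := by
    intro h0
    apply hp
    have := h
    rw [h0, zero_mul] at this
    rcases mul_eq_zero.mp this.symm with h1 | h1
    · exact h1
    · exact absurd h1 (RatFunc.denom_ne_zero f)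
  have h1 : (f.num * q).rootMultiplicity α = (p * f.denom).rootMultiplicity α := by rw [h]
  rw [Polynomial.rootMultiplicity_mul (mul_ne_zero hnum hq),
      Polynomial.rootMultiplicity_mul (mul_ne_zero hp (RatFunc.denom_ne_zero f))] at h1
  unfold ordAt
  omega

/-- If two distinct nonzero rational functions `f₁, f₂` take the same
value at the finite rational place `P_α`, then
`ord_α (f₁ - f₂) ≥ min (ord_α f₁) 0 + min (ord_α f₂) 0 + 1`; i.e.
`f₁ - f₂ ∈ L(G₁ + G₂ - P_α)` where `G_i` is the pole divisor of `f_i`. -/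
theorem ordAt_sub_ge_of_ev_eq
    {Fq : Type*} [Field Fq] [Fintype Fq] [DecidableEq Fq] (α : Fq)
    (f₁ f₂ : RatFunc Fq) (hf₁ : f₁ ≠ 0) (hf₂ : f₂ ≠ 0) (hne : f₁ ≠ f₂)
    (hev : ev f₁ (some α) = ev f₂ (some α)) :
    ordAt α (f₁ - f₂) ≥ min (ordAt α f₁) 0 + min (ordAt α f₂) 0 + 1 := by
  set n₁ := f₁.num with hn₁
  set d₁ := f₁.denom with hd₁
  set n₂ := f₂.num with hn₂
  set d₂ := f₂.denom with hd₂
  have hd₁0 : d₁ ≠ 0 := RatFunc.denom_ne_zero f₁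
  have hd₂0 : d₂ ≠ 0 := RatFunc.denom_ne_zero f₂
  have hn₁0 : n₁ ≠ 0 := RatFunc.num_ne_zero hf₁
  have hn₂0 : n₂ ≠ 0 := RatFunc.num_ne_zero hf₂
  have hsub : f₁ - f₂ ≠ 0 := sub_ne_zero.mpr hne
  set N := n₁ * d₂ - n₂ * d₁ with hN
  have hN0 : N ≠ 0 := by
    intro h0
    apply hne
    have : (algebraMap (Polynomial Fq) (RatFunc Fq) n₁) * algebraMap _ _ d₂
        = (algebraMap (Polynomial Fq) (RatFunc Fq) n₂) * algebraMap _ _ d₁ := by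
      rw [← map_mul, ← map_mul]
      congr 1
      linear_combination h0
    have e1 := RatFunc.num_div_denom f₁
    have e2 := RatFunc.num_div_denom f₂
    rw [← e1, ← e2]
    rw [div_eq_div_iff (RatFunc.algebraMap_ne_zero hd₁0) (RatFunc.algebraMap_ne_zero hd₂0)]
    exact this
  -- f₁ - f₂ = N / (d₁ * d₂)
  have hrep : (f₁ - f₂).num * (d₁ * d₂) = N * (f₁ - f₂).denom := by
    rw [RatFunc.num_mul_eq_mul_denom_iff (mul_ne_zero hd₁0 hd₂0)]
    conv_lhs => rw [← RatFunc.num_div_denom f₁, ← RatFunc.num_div_denom f₂]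
    rw [div_sub_div _ _ (RatFunc.algebraMap_ne_zero hd₁0) (RatFunc.algebraMap_ne_zero hd₂0), hN]
    simp only [map_sub, map_mul]
    congr 1
    ring
  have key := ordAt_eq_of_eq_div α (f₁ - f₂) N (d₁ * d₂) hN0 (mul_ne_zero hd₁0 hd₂0) hrep
  rw [Polynomial.rootMultiplicity_mul (mul_ne_zero hd₁0 hd₂0)] at key
  -- coprimality facts
  have hcop₁ : IsCoprime n₁ d₁ := RatFunc.isCoprime_num_denom f₁
  have hcop₂ : IsCoprime n₂ d₂ := RatFunc.isCoprime_num_denom f₂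
  by_cases h1 : d₁.eval α = 0
  · by_cases h2 : d₂.eval α = 0
    · -- both poles: mins are the negative ords
      have hrm₁ : 1 ≤ d₁.rootMultiplicity α := (Polynomial.rootMultiplicity_pos hd₁0).mpr h1
      have hrm₂ : 1 ≤ d₂.rootMultiplicity α := (Polynomial.rootMultiplicity_pos hd₂0).mpr h2
      have hnr₁ : n₁.rootMultiplicity α = 0 := by
        apply Polynomial.rootMultiplicity_eq_zero
        intro hroot
        obtain ⟨a, b, hab⟩ := hcop₁
        rw [Polynomial.IsRoot] at hroot
        have := congrArg (Polynomial.eval α) hab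
        simp [hroot, h1] at this
      have hnr₂ : n₂.rootMultiplicity α = 0 := by
        apply Polynomial.rootMultiplicity_eq_zero
        intro hroot
        obtain ⟨a, b, hab⟩ := hcop₂
        rw [Polynomial.IsRoot] at hroot
        have := congrArg (Polynomial.eval α) hab
        simp [hroot, h2] at this
      have hmin : min (d₂.rootMultiplicity α) (d₁.rootMultiplicity α)
          ≤ N.rootMultiplicity α := by
        rw [Polynomial.le_rootMultiplicity_iff hN0, hN]
        apply dvd_sub
        · exact ((pow_dvd_pow _ (min_le_left _ _)).trans
            (Polynomial.pow_rootMultiplicity_dvd d₂ α)).trans (dvd_mul_left d₂ n₁)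
        · exact ((pow_dvd_pow _ (min_le_right _ _)).trans
            (Polynomial.pow_rootMultiplicity_dvd d₁ α)).trans (dvd_mul_left d₁ n₂)
      have hord₁ : ordAt α f₁ = -(d₁.rootMultiplicity α : ℤ) := by
        unfold ordAt; rw [← hn₁, ← hd₁, hnr₁]; simp
      have hord₂ : ordAt α f₂ = -(d₂.rootMultiplicity α : ℤ) := by
        unfold ordAt; rw [← hn₂, ← hd₂, hnr₂]; simp
      rw [key, hord₁, hord₂]
      omega
    · -- contradiction: ev f₁ = none ≠ some
      exfalso
      simp only [ev, ← hd₁, ← hd₂, h1, h2, ne_eq, not_true_eq_false, if_false, not_false_eq_true, if_true] at hev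
      cases hev
  · by_cases h2 : d₂.eval α = 0
    · exfalso
      simp only [ev, ← hd₁, ← hd₂, h1, h2, ne_eq, not_false_eq_true, if_true, not_true_eq_false, if_false] at hev
      cases hev
    · -- no poles
      have hrm₁ : d₁.rootMultiplicity α = 0 := Polynomial.rootMultiplicity_eq_zero h1
      have hrm₂ : d₂.rootMultiplicity α = 0 := Polynomial.rootMultiplicity_eq_zero h2
      have hval : n₁.eval α / d₁.eval α = n₂.eval α / d₂.eval α := by
        simp only [ev, ← hn₁, ← hn₂, ← hd₁, ← hd₂, h1, h2, ne_eq, not_false_eq_true, if_true, Option.some_inj] at hev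
        exact hev
      have hNroot : N.eval α = 0 := by
        have := (div_eq_div_iff h1 h2).mp hval
        simp [hN, this]
      have hNrm : 1 ≤ N.rootMultiplicity α := (Polynomial.rootMultiplicity_pos hN0).mpr hNroot
      have hord₁ : 0 ≤ ordAt α f₁ := by unfold ordAt; rw [← hn₁, ← hd₁, hrm₁]; simp
      have hord₂ : 0 ≤ ordAt α f₂ := by unfold ordAt; rw [← hn₂, ← hd₂, hrm₂]; simp
      rw [min_eq_right hord₁, min_eq_right hord₂, key, hrm₁, hrm₂]
      omega
end

section
/- Let F_q be a finite field. For a nonzero f ∈ F_q(x), define ord_∞ f := deg(denom f) − deg(num f) ∈ ℤ (the negative of the integral degree of f). Let f₁, f₂ be nonzero elements of F_q(x) with f₁ ≠ f₂, and suppose ev f₁ ∞ = ev f₂ ∞. Then ord_∞(f₁ − f₂) ≥ min(ord_∞ f₁, 0) + min(ord_∞ f₂, 0) + 1. -/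
open Polynomial

/-- The order of vanishing of a nonzero rational function at the infinite place
`P_∞`, namely `deg(denom f) - deg(num f) = -intDegree f`. -/
noncomputable def ordInf {Fq : Type*} [Field Fq] (f : RatFunc Fq) : ℤ :=
  -(f.intDegree)

lemma deg_iff_aux {K : Type*} [Field K] (f : RatFunc K) (hf : f ≠ 0) :
    (f.num.degree = f.denom.degree ↔ f.intDegree = 0) ∧
    (f.num.degree < f.denom.degree ↔ f.intDegree < 0) := by
  rw [Polynomial.degree_eq_natDegree (RatFunc.num_ne_zero hf),
    Polynomial.degree_eq_natDegree f.denom_ne_zero, RatFunc.intDegree, sub_eq_zero, sub_neg]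
  constructor
  · constructor
    · intro h; exact_mod_cast h
    · intro h; exact_mod_cast h
  · constructor
    · intro h; exact_mod_cast h
    · intro h; exact_mod_cast h

/-- If two distinct nonzero rational functions `f₁, f₂` take the same
value at the infinite place `P_∞`, then
`ord_∞ (f₁ - f₂) ≥ min (ord_∞ f₁) 0 + min (ord_∞ f₂) 0 + 1`; i.e.
`f₁ - f₂ ∈ L(G₁ + G₂ - P_∞)` where `G_i` is the pole divisor of `f_i`. -/
theorem ordInf_sub_ge_of_ev_eq
    {Fq : Type*} [Field Fq] [Fintype Fq] [DecidableEq Fq]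
    (f₁ f₂ : RatFunc Fq) (hf₁ : f₁ ≠ 0) (hf₂ : f₂ ≠ 0) (hne : f₁ ≠ f₂)
    (hev : ev f₁ none = ev f₂ none) :
    ordInf (f₁ - f₂) ≥ min (ordInf f₁) 0 + min (ordInf f₂) 0 + 1 := by
  have hsub : f₁ - f₂ ≠ 0 := sub_ne_zero.mpr hne
  have hsub' : f₁ + -f₂ ≠ 0 := by rwa [← sub_eq_add_neg]
  obtain ⟨h1eq, h1lt⟩ := deg_iff_aux f₁ hf₁
  obtain ⟨h2eq, h2lt⟩ := deg_iff_aux f₂ hf₂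
  have hmax : (f₁ - f₂).intDegree ≤ max f₁.intDegree f₂.intDegree := by
    have := RatFunc.intDegree_add_le (x := f₁) (y := -f₂) (neg_ne_zero.mpr hf₂) hsub'
    rwa [← sub_eq_add_neg, RatFunc.intDegree_neg] at this
  rw [ge_iff_le, ordInf, ordInf, ordInf]
  simp only [ev] at hev
  rcases lt_trichotomy f₁.intDegree 0 with hd₁ | hd₁ | hd₁ <;>
    rcases lt_trichotomy f₂.intDegree 0 with hd₂ | hd₂ | hd₂
  -- d₁ < 0, d₂ < 0
  · have := le_max_iff.mp hmax; omega
  -- d₁ < 0, d₂ = 0 : contradiction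
  · exfalso
    rw [if_neg (by rw [h1eq]; omega), if_pos (h1lt.mpr hd₁), if_pos (h2eq.mpr hd₂)] at hev
    have : f₂.num.leadingCoeff / f₂.denom.leadingCoeff ≠ 0 :=
      div_ne_zero (Polynomial.leadingCoeff_ne_zero.mpr (RatFunc.num_ne_zero hf₂))
        (Polynomial.leadingCoeff_ne_zero.mpr f₂.denom_ne_zero)
    exact this (Option.some_injective _ hev).symm
  -- d₁ < 0, d₂ > 0 : contradiction
  · exfalso
    rw [if_neg (by rw [h1eq]; omega), if_pos (h1lt.mpr hd₁),
      if_neg (by rw [h2eq]; omega), if_neg (by rw [h2lt]; omega)] at hev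
    cases hev
  -- d₁ = 0, d₂ < 0 : contradiction
  · exfalso
    rw [if_pos (h1eq.mpr hd₁), if_neg (by rw [h2eq]; omega), if_pos (h2lt.mpr hd₂)] at hev
    have : f₁.num.leadingCoeff / f₁.denom.leadingCoeff ≠ 0 :=
      div_ne_zero (Polynomial.leadingCoeff_ne_zero.mpr (RatFunc.num_ne_zero hf₁))
        (Polynomial.leadingCoeff_ne_zero.mpr f₁.denom_ne_zero)
    exact this (Option.some_injective _ hev)
  -- d₁ = 0, d₂ = 0 : the cancellation case
  · rw [if_pos (h1eq.mpr hd₁), if_pos (h2eq.mpr hd₂)] at hev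
    have hlc := Option.some_injective _ hev
    have hn₁ := RatFunc.num_ne_zero hf₁
    have hn₂ := RatFunc.num_ne_zero hf₂
    have hd₁' := f₁.denom_ne_zero
    have hd₂' := f₂.denom_ne_zero
    have hnd₁ : f₁.num.natDegree = f₁.denom.natDegree := by
      rw [RatFunc.intDegree, sub_eq_zero] at hd₁; exact_mod_cast hd₁
    have hnd₂ : f₂.num.natDegree = f₂.denom.natDegree := by
      rw [RatFunc.intDegree, sub_eq_zero] at hd₂; exact_mod_cast hd₂
    -- product identity:
    have hprod : (f₁ - f₂).num * (f₁.denom * f₂.denom)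
        = (f₁.num * f₂.denom - f₁.denom * f₂.num) * (f₁ - f₂).denom := by
      rw [RatFunc.num_mul_eq_mul_denom_iff (mul_ne_zero hd₁' hd₂')]
      conv_lhs => rw [← RatFunc.num_div_denom f₁, ← RatFunc.num_div_denom f₂]
      rw [div_sub_div _ _ (RatFunc.algebraMap_ne_zero hd₁') (RatFunc.algebraMap_ne_zero hd₂'),
        map_sub, map_mul, map_mul, map_mul]
    have hp : f₁.num * f₂.denom - f₁.denom * f₂.num ≠ 0 := by
      intro h
      rw [h, zero_mul] at hprod
      exact mul_ne_zero (RatFunc.num_ne_zero hsub) (mul_ne_zero hd₁' hd₂') hprod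
    have hID : (f₁ - f₂).intDegree =
        ((f₁.num * f₂.denom - f₁.denom * f₂.num).natDegree : ℤ)
          - ((f₁.denom * f₂.denom).natDegree : ℤ) :=
      Polynomial.natDegree_sub_eq_of_prod_eq (RatFunc.num_ne_zero hsub)
        (f₁ - f₂).denom_ne_zero hp (mul_ne_zero hd₁' hd₂') hprod
    -- leading coefficients cancel
    have hdegeq : (f₁.num * f₂.denom).degree = (f₁.denom * f₂.num).degree := by
      rw [Polynomial.degree_mul, Polynomial.degree_mul,
        Polynomial.degree_eq_natDegree hn₁, Polynomial.degree_eq_natDegree hn₂,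
        Polynomial.degree_eq_natDegree hd₁', Polynomial.degree_eq_natDegree hd₂',
        hnd₁, hnd₂, add_comm]
    have hlc' : (f₁.num * f₂.denom).leadingCoeff = (f₁.denom * f₂.num).leadingCoeff := by
      rw [Polynomial.leadingCoeff_mul, Polynomial.leadingCoeff_mul]
      have h1 : f₁.denom.leadingCoeff ≠ 0 := Polynomial.leadingCoeff_ne_zero.mpr hd₁'
      have h2 : f₂.denom.leadingCoeff ≠ 0 := Polynomial.leadingCoeff_ne_zero.mpr hd₂'
      field_simp at hlc
      linear_combination hlc
    have hdlt := Polynomial.degree_sub_lt hdegeq (mul_ne_zero hn₁ hd₂') hlc'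
    have hndlt : (f₁.num * f₂.denom - f₁.denom * f₂.num).natDegree
        < (f₁.num * f₂.denom).natDegree :=
      Polynomial.natDegree_lt_natDegree hp hdlt
    have hqdeg : (f₁.denom * f₂.denom).natDegree = (f₁.num * f₂.denom).natDegree := by
      rw [Polynomial.natDegree_mul hd₁' hd₂', Polynomial.natDegree_mul hn₁ hd₂', hnd₁]
    omega
  -- d₁ = 0, d₂ > 0 : contradiction
  · exfalso
    rw [if_pos (h1eq.mpr hd₁), if_neg (by rw [h2eq]; omega),
      if_neg (by rw [h2lt]; omega)] at hev
    cases hev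
  -- d₁ > 0, d₂ < 0 : contradiction
  · exfalso
    rw [if_neg (by rw [h1eq]; omega), if_neg (by rw [h1lt]; omega),
      if_neg (by rw [h2eq]; omega), if_pos (h2lt.mpr hd₂)] at hev
    cases hev
  -- d₁ > 0, d₂ = 0 : contradiction
  · exfalso
    rw [if_neg (by rw [h1eq]; omega), if_neg (by rw [h1lt]; omega),
      if_pos (h2eq.mpr hd₂)] at hev
    cases hev
  -- d₁ > 0, d₂ > 0
  · have := le_max_iff.mp hmax; omega
end

section
/- Let F_q be a finite field and m a positive integer. If f₁, f₂ ∈ F_q(x) are distinct, deg(num f_i) ≤ m and deg(denom f_i) ≤ m for i = 1, 2, then the number of elements α of F_q ∪ {∞} (encoded as Option F_q) with ev f₁ α = ev f₂ α is at most 2m. Equivalently, the Hamming distance between the words (ev f₁ α)_{α ∈ Option F_q} and (ev f₂ α)_{α ∈ Option F_q} of length q + 1 is at least q + 1 − 2m, where q = |F_q|. -/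
open Polynomial

/-- If `f₁ ≠ f₂` are rational functions whose numerators and
denominators in lowest terms have degree at most `m`, then their evaluation words
agree in at most `2m` of the `q + 1` coordinates; equivalently, the Hamming distance
between the two words of length `q + 1` is at least `q + 1 - 2m`. -/
theorem agreement_le_and_hammingDist_ge
    {Fq : Type*} [Field Fq] [Fintype Fq] [DecidableEq Fq] (m : ℕ) (hm : 0 < m)
    (f₁ f₂ : RatFunc Fq) (hne : f₁ ≠ f₂)
    (hnum₁ : f₁.num.degree ≤ (m : WithBot ℕ)) (hden₁ : f₁.denom.degree ≤ (m : WithBot ℕ))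
    (hnum₂ : f₂.num.degree ≤ (m : WithBot ℕ)) (hden₂ : f₂.denom.degree ≤ (m : WithBot ℕ)) :
    (Finset.univ.filter fun α : Option Fq => ev f₁ α = ev f₂ α).card ≤ 2 * m ∧
      hammingDist (fun α : Option Fq => ev f₁ α) (fun α : Option Fq => ev f₂ α) ≥
        Fintype.card Fq + 1 - 2 * m := by
  classical
  set D : Polynomial Fq := f₁.num * f₂.denom - f₂.num * f₁.denom with hDdef
  have hD0 : D ≠ 0 := by
    intro h
    apply hne
    have : f₁.num * f₂.denom = f₂.num * f₁.denom := by
      have := sub_eq_zero.mp h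
      linear_combination this
    rw [RatFunc.num_mul_eq_mul_denom_iff (RatFunc.denom_ne_zero f₂)] at this
    rw [this, RatFunc.num_div_denom]
  -- finite agreement points are roots of D
  have key_fin : ∀ α : Fq, ev f₁ (some α) = ev f₂ (some α) → D.eval α = 0 := by
    intro α h
    by_cases h₁ : f₁.denom.eval α = 0 <;> by_cases h₂ : f₂.denom.eval α = 0
    · simp [hDdef, h₁, h₂]
    · exfalso; simp only [ev] at h; simp [h₁, h₂] at h
    · exfalso; simp only [ev] at h; simp [h₁, h₂] at h
    · have hval : f₁.num.eval α / f₁.denom.eval α = f₂.num.eval α / f₂.denom.eval α := by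
        simp only [ev] at h; simpa [h₁, h₂] using h
      field_simp at hval
      simp only [hDdef, eval_sub, eval_mul]
      linear_combination hval
  -- generic strict degree bound
  have prod_lt : ∀ p q : Polynomial Fq, p.degree < (m : WithBot ℕ) →
      q.degree ≤ (m : WithBot ℕ) → (p * q).degree < ((2 * m : ℕ) : WithBot ℕ) := by
    intro p q hp hq
    refine (degree_mul_le p q).trans_lt ?_
    have : p.degree + q.degree < (m : WithBot ℕ) + (m : WithBot ℕ) :=
      by
        by_cases hq0 : q.degree = ⊥
        · rw [hq0, WithBot.add_bot, ← Nat.cast_add]; exact WithBot.bot_lt_coe _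
        · exact WithBot.add_lt_add_of_lt_of_le hq0 hp hq
    refine this.trans_le (le_of_eq ?_)
    push_cast
    ring
  -- degree bound
  have hdegD : D.degree ≤ ((2 * m : ℕ) : WithBot ℕ) := by
    have h1 : (f₁.num * f₂.denom).degree ≤ ((2 * m : ℕ) : WithBot ℕ) := by
      refine degree_mul_le _ _ |>.trans ?_
      calc f₁.num.degree + f₂.denom.degree ≤ (m : WithBot ℕ) + (m : WithBot ℕ) :=
        add_le_add hnum₁ hden₂
      _ = ((2 * m : ℕ) : WithBot ℕ) := by push_cast; ring
    have h2 : (f₂.num * f₁.denom).degree ≤ ((2 * m : ℕ) : WithBot ℕ) := by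
      refine degree_mul_le _ _ |>.trans ?_
      calc f₂.num.degree + f₁.denom.degree ≤ (m : WithBot ℕ) + (m : WithBot ℕ) :=
        add_le_add hnum₂ hden₁
      _ = ((2 * m : ℕ) : WithBot ℕ) := by push_cast; ring
    exact (degree_sub_le _ _).trans (max_le h1 h2)
  -- strict degree bound when the functions agree at infinity
  have key_inf : ev f₁ none = ev f₂ none → D.degree < ((2 * m : ℕ) : WithBot ℕ) := by
    intro h
    simp only [ev] at h
    by_cases c₁ : f₁.num.degree = f₁.denom.degree <;>
      by_cases c₂ : f₂.num.degree = f₂.denom.degree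
    · -- both equal degrees
      simp only [c₁, c₂, if_pos rfl] at h
      rw [(RatFunc.monic_denom f₁).leadingCoeff, (RatFunc.monic_denom f₂).leadingCoeff,
        div_one, div_one] at h
      have hlc : f₁.num.leadingCoeff = f₂.num.leadingCoeff := by simpa using h
      have hn₁ : f₁.num ≠ 0 := by
        intro h0
        rw [h0, degree_zero] at c₁
        exact (RatFunc.denom_ne_zero f₁) (degree_eq_bot.mp c₁.symm)
      have hdeq : (f₁.num * f₂.denom).degree = (f₂.num * f₁.denom).degree := by
        rw [degree_mul, degree_mul, c₁, c₂]; ring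
      have hlceq : (f₁.num * f₂.denom).leadingCoeff = (f₂.num * f₁.denom).leadingCoeff := by
        rw [leadingCoeff_mul, leadingCoeff_mul, (RatFunc.monic_denom f₁).leadingCoeff,
          (RatFunc.monic_denom f₂).leadingCoeff, hlc]
      have hne' : f₁.num * f₂.denom ≠ 0 := mul_ne_zero hn₁ (RatFunc.denom_ne_zero f₂)
      refine (degree_sub_lt hdeq hne' hlceq).trans_le ?_
      refine degree_mul_le _ _ |>.trans ?_
      calc f₁.num.degree + f₂.denom.degree ≤ (m : WithBot ℕ) + (m : WithBot ℕ) :=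
        add_le_add hnum₁ hden₂
      _ = ((2 * m : ℕ) : WithBot ℕ) := by push_cast; ring
    · -- f₁ equal degrees, f₂ not: impossible
      exfalso
      simp only [c₁, if_pos rfl, if_neg c₂] at h
      by_cases c₂' : f₂.num.degree < f₂.denom.degree
      · simp only [if_pos c₂'] at h
        rw [(RatFunc.monic_denom f₁).leadingCoeff, div_one] at h
        have hlc0 : f₁.num.leadingCoeff = 0 := by simpa using h
        have hn₁0 : f₁.num = 0 := leadingCoeff_eq_zero.mp hlc0
        rw [hn₁0, degree_zero] at c₁
        exact (RatFunc.denom_ne_zero f₁) (degree_eq_bot.mp c₁.symm)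
      · simp [if_neg c₂'] at h
    · -- f₂ equal degrees, f₁ not
      exfalso
      simp only [c₂, if_neg c₁, if_pos rfl] at h
      by_cases c₁' : f₁.num.degree < f₁.denom.degree
      · simp only [if_pos c₁'] at h
        rw [(RatFunc.monic_denom f₂).leadingCoeff, div_one] at h
        have hlc0 : f₂.num.leadingCoeff = 0 := by simpa using h.symm
        have hn₂0 : f₂.num = 0 := leadingCoeff_eq_zero.mp hlc0
        rw [hn₂0, degree_zero] at c₂
        exact (RatFunc.denom_ne_zero f₂) (degree_eq_bot.mp c₂.symm)
      · simp [if_neg c₁'] at h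
    · -- neither has equal degrees
      simp only [if_neg c₁, if_neg c₂] at h
      by_cases c₁' : f₁.num.degree < f₁.denom.degree <;>
        by_cases c₂' : f₂.num.degree < f₂.denom.degree
      · -- both numerators have smaller degree
        refine (degree_sub_le _ _).trans_lt (max_lt ?_ ?_)
        · exact prod_lt _ _ (c₁'.trans_le hden₁) hden₂
        · exact prod_lt _ _ (c₂'.trans_le hden₂) hden₁
      · exfalso; simp [if_pos c₁', if_neg c₂'] at h
      · exfalso; simp [if_neg c₁', if_pos c₂'] at h
      · -- both denominators have smaller degree
        have d₁lt : f₁.denom.degree < f₁.num.degree :=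
          lt_of_le_of_ne (not_lt.mp c₁') (Ne.symm c₁)
        have d₂lt : f₂.denom.degree < f₂.num.degree :=
          lt_of_le_of_ne (not_lt.mp c₂') (Ne.symm c₂)
        refine (degree_sub_le _ _).trans_lt (max_lt ?_ ?_)
        · rw [mul_comm]; exact prod_lt _ _ (d₂lt.trans_le hnum₂) hnum₁
        · rw [mul_comm]; exact prod_lt _ _ (d₁lt.trans_le hnum₁) hnum₂
  -- cardinality bound
  have hcard : (Finset.univ.filter fun α : Option Fq => ev f₁ α = ev f₂ α).card ≤ 2 * m := by
    by_cases hinf : ev f₁ none = ev f₂ none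
    · have hnd : D.natDegree < 2 * m := (natDegree_lt_iff_degree_lt hD0).mpr (key_inf hinf)
      have hsub : (Finset.univ.filter fun α : Option Fq => ev f₁ α = ev f₂ α) ⊆
          insert none (D.roots.toFinset.image some) := by
        intro a ha
        simp only [Finset.mem_filter, Finset.mem_univ, true_and] at ha
        cases a with
        | none => simp
        | some α =>
          refine Finset.mem_insert_of_mem ?_
          simp only [Finset.mem_image, Multiset.mem_toFinset]
          exact ⟨α, (mem_roots hD0).mpr (key_fin α ha), rfl⟩
      calc (Finset.univ.filter fun α : Option Fq => ev f₁ α = ev f₂ α).card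
          ≤ (insert none (D.roots.toFinset.image some)).card := Finset.card_le_card hsub
        _ ≤ (D.roots.toFinset.image some).card + 1 := Finset.card_insert_le _ _
        _ ≤ D.roots.toFinset.card + 1 := by gcongr; exact Finset.card_image_le
        _ ≤ Multiset.card D.roots + 1 := by gcongr; exact D.roots.toFinset_card_le
        _ ≤ D.natDegree + 1 := by gcongr; exact D.card_roots' 
        _ ≤ 2 * m := by omega
    · have hnd : D.natDegree ≤ 2 * m := natDegree_le_iff_degree_le.mpr hdegD
      have hsub : (Finset.univ.filter fun α : Option Fq => ev f₁ α = ev f₂ α) ⊆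
          D.roots.toFinset.image some := by
        intro a ha
        simp only [Finset.mem_filter, Finset.mem_univ, true_and] at ha
        cases a with
        | none => exact absurd ha hinf
        | some α =>
          simp only [Finset.mem_image, Multiset.mem_toFinset]
          exact ⟨α, (mem_roots hD0).mpr (key_fin α ha), rfl⟩
      calc (Finset.univ.filter fun α : Option Fq => ev f₁ α = ev f₂ α).card
          ≤ (D.roots.toFinset.image some).card := Finset.card_le_card hsub
        _ ≤ D.roots.toFinset.card := Finset.card_image_le
        _ ≤ Multiset.card D.roots := D.roots.toFinset_card_le
        _ ≤ D.natDegree := D.card_roots'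
        _ ≤ 2 * m := hnd
  refine ⟨hcard, ?_⟩
  have hsplit := Finset.card_filter_add_card_filter_not
    (s := Finset.univ) (p := fun α : Option Fq => ev f₁ α = ev f₂ α)
  have huniv : (Finset.univ : Finset (Option Fq)).card = Fintype.card Fq + 1 := by
    simp [Finset.card_univ]
  have hdist : hammingDist (fun α : Option Fq => ev f₁ α) (fun α : Option Fq => ev f₂ α) =
      (Finset.univ.filter fun α : Option Fq => ¬ (ev f₁ α = ev f₂ α)).card := rfl
  rw [ge_iff_le, hdist]
  omega
end

section
/- Let F_q be a finite field with q elements and m a positive integer with 2m ≤ q. Then the map f ↦ (ev f α)_{α ∈ Option F_q} is injective on L_m := {f ∈ F_q(x) : deg(num f) ≤ m and deg(denom f) ≤ m}, and for every f ∈ L_m the word (ev f α)_{α ∈ Option F_q} differs from the constant-∞ word in at least q + 1 − m coordinates. -/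
open Polynomial

lemma cast_two_mul (m : ℕ) : ((2 * m : ℕ) : WithBot ℕ) = (m : WithBot ℕ) + (m : WithBot ℕ) := by
  rw [two_mul]; exact_mod_cast Nat.cast_add (R := WithBot ℕ) m m

/-- For `0 < m` and `2m ≤ q`, the evaluation map `f ↦ (ev f α)_α`
is injective on `L_m = {f : deg(num f) ≤ m, deg(denom f) ≤ m}`, and the evaluation
word of each `f ∈ L_m` differs from the constant-`∞` word in at least `q + 1 - m`
coordinates. -/
theorem evalMap_injOn_and_dist_to_infty
    {Fq : Type*} [Field Fq] [Fintype Fq] [DecidableEq Fq] (m : ℕ) (hm : 0 < m)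
    (hq : 2 * m ≤ Fintype.card Fq) :
    Set.InjOn (fun f : RatFunc Fq => (fun α : Option Fq => ev f α))
      {f : RatFunc Fq | f.num.degree ≤ (m : WithBot ℕ) ∧ f.denom.degree ≤ (m : WithBot ℕ)} ∧
    ∀ f : RatFunc Fq, f.num.degree ≤ (m : WithBot ℕ) → f.denom.degree ≤ (m : WithBot ℕ) →
      hammingDist (fun α : Option Fq => ev f α) (fun _ : Option Fq => (none : Option Fq)) ≥
        Fintype.card Fq + 1 - m := by
  constructor
  · rintro f ⟨hfn, hfd⟩ g ⟨hgn, hgd⟩ hev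
    simp only at hev
    set h : Polynomial Fq := f.num * g.denom - g.num * f.denom with hh
    have hdf := RatFunc.denom_ne_zero f
    have hdg := RatFunc.denom_ne_zero g
    -- every element of Fq is a root of h
    have hroots : ∀ α : Fq, h.eval α = 0 := by
      intro α
      have h1 : ev f (some α) = ev g (some α) := congrFun hev (some α)
      simp only [ev, ne_eq] at h1
      by_cases hdfa : f.denom.eval α = 0
      · by_cases hdga : g.denom.eval α = 0
        · simp [hh, hdfa, hdga]
        · simp [hdfa, hdga] at h1
      · by_cases hdga : g.denom.eval α = 0
        · simp [hdfa, hdga] at h1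
        · simp only [hdfa, hdga, not_false_eq_true, if_true, Option.some.injEq] at h1
          rw [div_eq_div_iff hdfa hdga] at h1
          simp [hh, h1]
    -- degree of h is < 2m, using the evaluation at infinity
    have hdeg : h.degree < ((2 * m : ℕ) : WithBot ℕ) := by
      have h1 : ev f none = ev g none := congrFun hev none
      simp only [ev] at h1
      have hddf : f.denom.degree ≠ ⊥ := fun hb => hdf (degree_eq_bot.mp hb)
      have hddg : g.denom.degree ≠ ⊥ := fun hb => hdg (degree_eq_bot.mp hb)
      have hm0 : (m : WithBot ℕ) ≠ ⊥ := by exact_mod_cast WithBot.coe_ne_bot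
      by_cases hfe : f.num.degree = f.denom.degree
      · by_cases hge : g.num.degree = g.denom.degree
        · -- both degrees equal
          rw [if_pos hfe, if_pos hge] at h1
          have hnf0 : f.num ≠ 0 := by
            intro h0; exact hddf (by rw [← hfe, h0, degree_zero])
          have hlcdf : f.denom.leadingCoeff ≠ 0 := leadingCoeff_ne_zero.mpr hdf
          have hlcdg : g.denom.leadingCoeff ≠ 0 := leadingCoeff_ne_zero.mpr hdg
          have h1' := Option.some.inj h1
          rw [div_eq_div_iff hlcdf hlcdg] at h1'
          have hdeq : (f.num * g.denom).degree = (g.num * f.denom).degree := by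
            rw [degree_mul, degree_mul, hfe, hge, add_comm]
          have hlc : (f.num * g.denom).leadingCoeff = (g.num * f.denom).leadingCoeff := by
            rw [leadingCoeff_mul, leadingCoeff_mul]; exact h1'
          have := degree_sub_lt hdeq (mul_ne_zero hnf0 hdg) hlc
          refine lt_of_lt_of_le this ?_
          rw [degree_mul, cast_two_mul]
          exact add_le_add (hfe ▸ hfd) hgd
        · -- f ratio value, g not equal : g value is 0 or ∞, contradiction either way
          exfalso
          have hnf0 : f.num ≠ 0 := by
            intro h0; exact hddf (by rw [← hfe, h0, degree_zero])
          rw [if_pos hfe, if_neg hge] at h1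
          by_cases hglt : g.num.degree < g.denom.degree
          · rw [if_pos hglt] at h1
            have h1' := Option.some.inj h1
            rcases div_eq_zero_iff.mp h1' with h' | h'
            · exact (leadingCoeff_ne_zero.mpr hnf0) h'
            · exact (leadingCoeff_ne_zero.mpr hdf) h'
          · rw [if_neg hglt] at h1
            exact Option.some_ne_none _ h1
      · by_cases hge : g.num.degree = g.denom.degree
        · -- symmetric contradiction
          exfalso
          have hng0 : g.num ≠ 0 := by
            intro h0; exact hddg (by rw [← hge, h0, degree_zero])
          rw [if_neg hfe, if_pos hge] at h1
          by_cases hflt : f.num.degree < f.denom.degree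
          · rw [if_pos hflt] at h1
            have h1' := (Option.some.inj h1).symm
            rcases div_eq_zero_iff.mp h1' with h' | h'
            · exact (leadingCoeff_ne_zero.mpr hng0) h'
            · exact (leadingCoeff_ne_zero.mpr hdg) h'
          · rw [if_neg hflt] at h1
            exact Option.some_ne_none _ (h1.symm)
        · rw [if_neg hfe, if_neg hge] at h1
          by_cases hflt : f.num.degree < f.denom.degree
          · by_cases hglt : g.num.degree < g.denom.degree
            · -- both num degree < denom degree
              have b1 : (f.num * g.denom).degree < ((2 * m : ℕ) : WithBot ℕ) := by
                rw [degree_mul, cast_two_mul]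
                exact WithBot.add_lt_add_of_lt_of_le hddg (lt_of_lt_of_le hflt hfd) hgd
              have b2 : (g.num * f.denom).degree < ((2 * m : ℕ) : WithBot ℕ) := by
                rw [degree_mul, cast_two_mul]
                exact WithBot.add_lt_add_of_lt_of_le hddf (lt_of_lt_of_le hglt hgd) hfd
              exact lt_of_le_of_lt (degree_sub_le _ _) (max_lt b1 b2)
            · exfalso
              rw [if_pos hflt, if_neg hglt] at h1
              exact Option.some_ne_none _ h1
          · by_cases hglt : g.num.degree < g.denom.degree
            · exfalso
              rw [if_neg hflt, if_pos hglt] at h1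
              exact Option.some_ne_none _ h1.symm
            · -- both num degree > denom degree
              have hflt' : f.denom.degree < f.num.degree :=
                lt_of_le_of_ne (not_lt.mp hflt) (Ne.symm hfe)
              have hglt' : g.denom.degree < g.num.degree :=
                lt_of_le_of_ne (not_lt.mp hglt) (Ne.symm hge)
              have b1 : (f.num * g.denom).degree < ((2 * m : ℕ) : WithBot ℕ) := by
                rw [degree_mul, cast_two_mul]
                exact WithBot.add_lt_add_of_le_of_lt (ne_bot_of_gt hflt') hfn (lt_of_lt_of_le hglt' hgn)
              have b2 : (g.num * f.denom).degree < ((2 * m : ℕ) : WithBot ℕ) := by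
                rw [degree_mul, cast_two_mul]
                exact WithBot.add_lt_add_of_le_of_lt (ne_bot_of_gt hglt') hgn (lt_of_lt_of_le hflt' hfn)
              exact lt_of_le_of_lt (degree_sub_le _ _) (max_lt b1 b2)
    -- conclude h = 0
    have hnat : h.natDegree < Fintype.card Fq := by
      rcases eq_or_ne h 0 with h0 | hne
      · rw [h0, natDegree_zero]; omega
      · exact (natDegree_lt_iff_degree_lt hne).mpr
          (lt_of_lt_of_le hdeg (by exact_mod_cast hq))
    have h0 : h = 0 :=
      Polynomial.eq_zero_of_natDegree_lt_card_of_eval_eq_zero h Function.injective_id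
        (fun α => hroots α) (by simpa using hnat)
    have hnd : f.num * g.denom = g.num * f.denom := sub_eq_zero.mp h0
    rw [RatFunc.num_mul_eq_mul_denom_iff hdg] at hnd
    rw [hnd, RatFunc.num_div_denom]
  · intro f hfn hfd
    classical
    have hdf := RatFunc.denom_ne_zero f
    have hRd : f.denom.roots.toFinset.card ≤ f.denom.natDegree :=
      le_trans (Multiset.toFinset_card_le _) (by exact_mod_cast Polynomial.card_roots' _)
    set S : Finset (Option Fq) :=
      Finset.univ.filter (fun α : Option Fq => ev f α = none) with hS
    have hSsub : ∀ α ∈ S, α = none ∨ ∃ a ∈ f.denom.roots.toFinset, α = some a := by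
      intro α hα
      rw [hS, Finset.mem_filter] at hα
      have hαn : ev f α = none := hα.2
      cases α with
      | none => exact Or.inl rfl
      | some a =>
        refine Or.inr ⟨a, ?_, rfl⟩
        simp only [ev, ne_eq, ite_not] at hαn
        split_ifs at hαn with h'
        · rw [Multiset.mem_toFinset, mem_roots hdf]; exact h'
    have hSm : S.card ≤ m := by
      have hmn : f.denom.natDegree ≤ m := natDegree_le_iff_degree_le.mpr hfd
      by_cases hcase : f.num.degree ≤ f.denom.degree
      · -- infinity coordinate is not in S
        have hsub : S ⊆ f.denom.roots.toFinset.image some := by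
          intro α hα
          rcases hSsub α hα with rfl | ⟨a, ha, rfl⟩
          · exfalso
            rw [hS, Finset.mem_filter] at hα
            have hαn : ev f none = none := hα.2
            simp only [ev] at hαn
            split_ifs at hαn with h1 h2
            exact absurd (lt_of_le_of_ne hcase h1) (by exact h2)
          · exact Finset.mem_image_of_mem some ha
        calc S.card ≤ (f.denom.roots.toFinset.image some).card := Finset.card_le_card hsub
          _ ≤ f.denom.roots.toFinset.card := Finset.card_image_le
          _ ≤ f.denom.natDegree := hRd
          _ ≤ m := hmn
      · -- denom has degree < m
        push_neg at hcase
        have hdlt : f.denom.degree < (m : WithBot ℕ) := lt_of_lt_of_le hcase hfn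
        have hndlt : f.denom.natDegree < m :=
          (natDegree_lt_iff_degree_lt hdf).mpr (by exact_mod_cast hdlt)
        have hsub : S ⊆ insert none (f.denom.roots.toFinset.image some) := by
          intro α hα
          rcases hSsub α hα with rfl | ⟨a, ha, rfl⟩
          · exact Finset.mem_insert_self _ _
          · exact Finset.mem_insert_of_mem (Finset.mem_image_of_mem some ha)
        calc S.card ≤ (insert none (f.denom.roots.toFinset.image some)).card :=
              Finset.card_le_card hsub
          _ ≤ (f.denom.roots.toFinset.image some).card + 1 := Finset.card_insert_le _ _
          _ ≤ f.denom.roots.toFinset.card + 1 := Nat.add_le_add_right Finset.card_image_le 1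
          _ ≤ m := by omega
    have hkey : (Finset.univ.filter (fun α : Option Fq => ev f α ≠ none)).card + S.card
        = Fintype.card Fq + 1 := by
      rw [hS]
      have := Finset.card_filter_add_card_filter_not
        (s := (Finset.univ : Finset (Option Fq))) (p := fun α : Option Fq => ev f α ≠ none)
      rw [Finset.card_univ, Fintype.card_option] at this
      rw [← this]
      congr 1
      apply Finset.card_nbij' id id <;> simp [Set.MapsTo, Set.LeftInvOn, Set.RightInvOn]
    have hdist : hammingDist (fun α : Option Fq => ev f α)
        (fun _ : Option Fq => (none : Option Fq))
        = (Finset.univ.filter (fun α : Option Fq => ev f α ≠ none)).card := rfl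
    rw [ge_iff_le, hdist]
    omega
end

section
/- For all integers q ≥ 2 and m ≥ 1 with 2m ≤ q, one has q^{2m+1} + q^{2m} − 2q^m + 2 > (q+1)^{2m}. -/
/-- Integer Bernoulli inequality: for `0 ≤ b ≤ a`,
`a^n * (a - n*(a-b)) ≤ b^n * a`. -/
lemma int_bernoulli (a b : ℤ) (hb : 0 ≤ b) (hab : b ≤ a) :
    ∀ n : ℕ, a ^ n * (a - (n : ℤ) * (a - b)) ≤ b ^ n * a := by
  intro n
  induction n with
  | zero => simp
  | succ n ih =>
    have ha : 0 ≤ a := hb.trans hab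
    have h1 : b * (a ^ n * (a - (n : ℤ) * (a - b))) ≤ b * (b ^ n * a) :=
      mul_le_mul_of_nonneg_left ih hb
    have h2 : 0 ≤ a ^ n * ((n : ℤ) * (a - b) ^ 2) := by
      have : (0:ℤ) ≤ (n : ℤ) * (a - b) ^ 2 :=
        mul_nonneg (by positivity) (sq_nonneg _)
      exact mul_nonneg (pow_nonneg ha n) this
    rw [pow_succ a, pow_succ b]
    push_cast
    nlinarith [h1, h2]

/-- For all integers `q ≥ 2` and `m ≥ 1` with `2m ≤ q`, one has
`q^(2m+1) + q^(2m) - 2*q^m + 2 > (q+1)^(2m)`. -/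
theorem size_gt_singleton_threshold (q : ℤ) (m : ℕ) (hq : 2 ≤ q) (hm : 1 ≤ m)
    (h : 2 * (m : ℤ) ≤ q) :
    q ^ (2 * m + 1) + q ^ (2 * m) - 2 * q ^ m + 2 > (q + 1) ^ (2 * m) := by
  have hq0 : (0:ℤ) ≤ q := by linarith
  have hxq : q ≤ q ^ m := by
    calc q = q ^ 1 := (pow_one q).symm
    _ ≤ q ^ m := pow_le_pow_right₀ (by linarith) hm
  have hx2 : (2:ℤ) ≤ q ^ m := le_trans hq hxq
  have hqq : q ^ (2 * m) = q ^ m * q ^ m := by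
    rw [two_mul, pow_add]
  have hsucc : q ^ (2 * m + 1) = q ^ (2 * m) * q := pow_succ q (2 * m)
  have hYnn : (0:ℤ) ≤ (q + 1) ^ (2 * m) := pow_nonneg (by linarith) _
  have hYge : q ^ (2 * m) ≤ (q + 1) ^ (2 * m) :=
    pow_le_pow_left₀ hq0 (by linarith) _
  rcases eq_or_lt_of_le h with heq | hlt
  · -- q = 2m
    subst heq
    set Q : ℤ := 2 * (m : ℤ) with hQ
    rcases eq_or_lt_of_le hm with hm1 | hm2
    · -- m = 1
      subst hm1
      norm_num [hQ]
    · -- m ≥ 2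
      have hm2' : (2:ℤ) ≤ (m:ℤ) := by exact_mod_cast hm2
      have A2 := int_bernoulli ((Q+1)^2) (Q^2) (sq_nonneg Q) (by nlinarith) m
      have hpm1 : ((Q+1)^2) ^ m = (Q+1) ^ (2*m) := by
        rw [← pow_mul, two_mul, ← two_mul]
      have hpm2 : (Q^2) ^ m = Q ^ m * Q ^ m := by
        rw [sq, mul_pow]
      rw [hpm1, hpm2] at A2
      have hsub : (Q+1)^2 - (m:ℤ) * ((Q+1)^2 - Q^2) = 3 * (m:ℤ) + 1 := by
        rw [hQ]; ring
      rw [hsub] at A2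
      set x : ℤ := Q ^ m with hx
      have hx0 : (0:ℤ) < x := by linarith
      have hx2m : 2 * (m:ℤ) ≤ x := hxq
      have hpos : (0:ℤ) < 3 * (m:ℤ) + 1 := by linarith
      have k1 : (0:ℤ) ≤ (m:ℤ) * (2*(m:ℤ)+1) * x * (x - 2*(m:ℤ)) :=
        mul_nonneg (by positivity) (by linarith)
      have k2 : (0:ℤ) ≤ (2*(m:ℤ)^2*(2*(m:ℤ)+1) - (6*(m:ℤ)+2)) * x :=
        mul_nonneg (by nlinarith) hx0.le
      have key : x * x * (Q+1)^2 <
          (3 * (m:ℤ) + 1) * (Q ^ (2*m+1) + Q ^ (2*m) - 2 * x + 2) := by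
        rw [hsucc, hqq]; simp only [hQ]
        nlinarith [k1, k2]
      have final : (Q+1)^(2*m) * (3 * (m:ℤ) + 1) <
          (Q ^ (2*m+1) + Q ^ (2*m) - 2 * x + 2) * (3 * (m:ℤ) + 1) := by
        nlinarith [A2, key]
      have := lt_of_mul_lt_mul_right final hpos.le
      linarith
  · -- q ≥ 2m + 1
    have A1 := int_bernoulli (q+1) q hq0 (by linarith) (2*m)
    have hc : ((2*m : ℕ) : ℤ) = 2 * (m:ℤ) := by push_cast; ring
    rw [hc] at A1
    have h2 : (2:ℤ) ≤ (q+1) - 2 * (m:ℤ) := by linarith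
    have h3 : 2 * (q+1)^(2*m) ≤ (q+1)^(2*m) * ((q+1) - 2*(m:ℤ) * ((q+1) - q)) := by
      nlinarith [hYnn, h2]
    have h4 : 2 * q ^ m ≤ q ^ (2*m) := by
      rw [hqq]; nlinarith [hx2]
    linarith [A1, h3, h4, hYge, hsucc]
end

section
/- For every fixed positive integer m there exists Q such that for all integers q ≥ Q (in particular q ≥ 2m), one has (q+2)^{q−2m} · (q^{2m+1} + q^{2m} − 2q^m + 2) > (q+1)^{q+1}; equivalently, q^{2m+1} + q^{2m} − 2q^m + 2 > (q+1)^{q+1} / (q+2)^{q−2m} for all sufficiently large q. -/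
/-- Bernoulli-type lower bound: `(q+2)^n ≥ (q+1)^n * (q+1+n)/(q+1)`. -/
lemma aux_bernoulli_lower (q : ℕ) : ∀ n : ℕ, (q+1)^n * (q+1+n) ≤ (q+2)^n * (q+1) := by
  intro n
  induction n with
  | zero => simp
  | succ k ih =>
    calc (q+1)^(k+1) * (q+1+(k+1))
        = (q+1) * ((q+1)^k * (q+1+k)) + (q+1)^k * (q+1) := by ring
      _ ≤ (q+1) * ((q+2)^k * (q+1)) + (q+2)^k * (q+1) :=
          Nat.add_le_add (Nat.mul_le_mul_left _ ih)
            (Nat.mul_le_mul_right _ (Nat.pow_le_pow_left (by omega) k))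
      _ = (q+2)^(k+1) * (q+1) := by ring

/-- Bernoulli-type upper bound: for `2k ≤ q`, `(q+1)^k ≤ q^k * (q+2k)/q`. -/
lemma aux_bernoulli_upper (q : ℕ) : ∀ k : ℕ, 2*k ≤ q → (q+1)^k * q ≤ q^k * (q + 2*k) := by
  intro k
  induction k with
  | zero => simp
  | succ j ih =>
    intro h
    have hj : 2*j ≤ q := by omega
    have hq : 0 < q := by omega
    calc (q+1)^(j+1) * q = ((q+1)^j * q) * (q+1) := by ring
      _ ≤ (q^j * (q + 2*j)) * (q+1) := Nat.mul_le_mul_right _ (ih hj)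
      _ ≤ q^(j+1) * (q + 2*(j+1)) := by
          have hpow : 0 < q^j := pow_pos hq j
          calc (q^j * (q + 2*j)) * (q+1) = q^j * ((q + 2*j) * (q+1)) := by ring
            _ ≤ q^j * (q * (q + 2*(j+1))) :=
                Nat.mul_le_mul_left _ (by nlinarith)
            _ = q^(j+1) * (q + 2*(j+1)) := by ring

/-- For every fixed positive integer `m`, for all sufficiently large
integers `q` (in particular `q ≥ 2m`), one has
`(q+2)^(q-2m) * (q^(2m+1) + q^(2m) - 2*q^m + 2) > (q+1)^(q+1)`, i.e. the size of the
code `C_m` exceeds the guarantee `(q+1)^(q+1) / (q+2)^(q-2m)` of Xing's construction. -/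
theorem eventually_size_gt_xing_bound (m : ℕ) (hm : 0 < m) :
    ∃ Q : ℕ, 2 * m ≤ Q ∧ ∀ q : ℕ, Q ≤ q →
      (q + 2) ^ (q - 2 * m) * (q ^ (2 * m + 1) + q ^ (2 * m) - 2 * q ^ m + 2) >
        (q + 1) ^ (q + 1) := by
  refine ⟨6*m+4, by omega, fun q hq => ?_⟩
  have hq2m : 2*m ≤ q := by omega
  have hq2 : 2 ≤ q := by omega
  set n := q - 2*m with hn
  -- the code size is at least q^(2m+1)
  have hqm2 : 2 ≤ q^m := le_trans hq2 (Nat.le_self_pow hm.ne' q)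
  have h2qm : 2*q^m ≤ q^(2*m) := by
    have h : q^(2*m) = q^m * q^m := by rw [two_mul, pow_add]
    rw [h]
    exact Nat.mul_le_mul_right _ hqm2
  have hA : q^(2*m+1) ≤ q ^ (2 * m + 1) + q ^ (2 * m) - 2 * q ^ m + 2 := by omega
  -- split the exponent
  have key : (q+1)^(q+1) = (q+1)^n * (q+1)^(2*m+1) := by
    rw [← pow_add]; congr 1; omega
  rw [gt_iff_lt, key]
  -- cancel a factor of (q+1)*q
  refine lt_of_mul_lt_mul_right ?_ (Nat.zero_le ((q+1)*q))
  have hL1 := aux_bernoulli_lower q n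
  have hL2 := aux_bernoulli_upper q (2*m+2) (by omega)
  calc (q+1)^n * (q+1)^(2*m+1) * ((q+1)*q)
      = (q+1)^n * ((q+1)^(2*m+2) * q) := by ring
    _ ≤ (q+1)^n * (q^(2*m+2) * (q + 2*(2*m+2))) := by gcongr
    _ < (q+1)^n * ((q+1+n) * q^(2*m+2)) := by
        have hpos : 0 < (q+1)^n * q^(2*m+2) :=
          Nat.mul_pos (pow_pos (by omega) n) (pow_pos (by omega) _)
        have hlt : q + 2*(2*m+2) < q+1+n := by omega
        calc (q+1)^n * (q^(2*m+2) * (q + 2*(2*m+2)))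
            = ((q+1)^n * q^(2*m+2)) * (q + 2*(2*m+2)) := by ring
          _ < ((q+1)^n * q^(2*m+2)) * (q+1+n) :=
              mul_lt_mul_of_pos_left hlt hpos
          _ = (q+1)^n * ((q+1+n) * q^(2*m+2)) := by ring
    _ = ((q+1)^n * (q+1+n)) * (q^(2*m+1) * q) := by ring
    _ ≤ ((q+2)^n * (q+1)) * (q^(2*m+1) * q) := by gcongr
    _ ≤ ((q+2)^n * (q+1)) * ((q ^ (2 * m + 1) + q ^ (2 * m) - 2 * q ^ m + 2) * q) := by gcongr
    _ = (q+2)^n * (q ^ (2 * m + 1) + q ^ (2 * m) - 2 * q ^ m + 2) * ((q+1)*q) := by ring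
end
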